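/- arXiv:2108.07773 — 2 statements merged into one kernel-verified Lean document; each statement's English description precedes it below -/
import Mathlib

section
/- Let D be a triangulated category with shift functor Σ, and let (U₁,V₁) and (U₂,V₂) be co-t-structures on D with V₁ ⊆ V₂. Set H := U₁ ∩ V₂. If (X,Y) is a cotorsion pair in D with V₁ ⊆ Y ⊆ V₂, then (X ∩ V₂, U₁ ∩ Y) is a cotorsion pair in H. -/
open CategoryTheory Limits Pretriangulated

universe v u

variable {C : Type u} [Category.{v} C] [Preadditive C] [HasZeroObject C]
  [HasShift C ℤ] [∀ n : ℤ, (CategoryTheory.shiftFunctor C n).Additive] [Pretriangulated C]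

/-- `A` and `B` form a biproduct decomposition of `E`. -/
def IsBiprodDecomp (A B E : C) : Prop :=
  ∃ (i : A ⟶ E) (j : B ⟶ E) (p : E ⟶ A) (q : E ⟶ B),
    i ≫ p = 𝟙 A ∧ j ≫ q = 𝟙 B ∧ i ≫ q = 0 ∧ j ≫ p = 0 ∧ p ≫ i + q ≫ j = 𝟙 E

/-- `A` is a direct summand of `E`. -/
def IsDirectSummand (A E : C) : Prop := ∃ B, IsBiprodDecomp A B E

/-- A class of objects is closed under direct summands. -/
def SummandClosed (X : Set C) : Prop := ∀ ⦃A E : C⦄, E ∈ X → IsDirectSummand A E → A ∈ X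

/-- The essential image of a class of objects under the shift by `n`. -/
def shiftSet (n : ℤ) (X : Set C) : Set C := {A | ∃ B ∈ X, Nonempty (A ≅ B⟦n⟧)}

/-- The class `X ∗ Y` of objects `E` admitting a distinguished triangle
`A ⟶ E ⟶ B ⟶ ΣA` with `A ∈ X` and `B ∈ Y`. -/
def starSet (X Y : Set C) : Set C :=
  {E | ∃ (A B : C) (_ : A ∈ X) (_ : B ∈ Y) (f : A ⟶ E) (g : E ⟶ B) (h : B ⟶ A⟦(1 : ℤ)⟧),
    Triangle.mk f g h ∈ distTriang C}

/-- A co-t-structure on a triangulated category. -/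
structure IsCoTStructure (U V : Set C) : Prop where
  summand_U : SummandClosed U
  summand_V : SummandClosed V
  hom_zero : ∀ ⦃A B : C⦄, A ∈ U → B ∈ V → ∀ f : A ⟶ B⟦(1 : ℤ)⟧, f = 0
  cover : ∀ E : C, E ∈ starSet (shiftSet (-1) U) V
  shift_le : shiftSet (-1) U ⊆ U

/-- A cotorsion pair in a triangulated category. -/
structure IsCotorsionPair (X Y : Set C) : Prop where
  summand_X : SummandClosed X
  summand_Y : SummandClosed Y
  hom_zero : ∀ ⦃A B : C⦄, A ∈ X → B ∈ Y → ∀ f : A ⟶ B⟦(1 : ℤ)⟧, f = 0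
  cover₁ : ∀ E : C, E ∈ starSet X (shiftSet 1 Y)
  cover₂ : ∀ E : C, E ∈ starSet (shiftSet (-1) X) Y

/-- `A` is a direct summand of `E` inside the full additive subcategory `H`. -/
def IsDirectSummandIn (H : Set C) (A E : C) : Prop :=
  A ∈ H ∧ ∃ B ∈ H, IsBiprodDecomp A B E

/-- A cotorsion pair in an extension-closed subcategory `H` of a triangulated category. -/
structure IsCotorsionPairIn (H A B : Set C) : Prop where
  subset_A : A ⊆ H
  subset_B : B ⊆ H
  summand_A : ∀ ⦃X E : C⦄, E ∈ A → IsDirectSummandIn H X E → X ∈ A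
  summand_B : ∀ ⦃X E : C⦄, E ∈ B → IsDirectSummandIn H X E → X ∈ B
  hom_zero : ∀ ⦃X Y : C⦄, X ∈ A → Y ∈ B → ∀ f : X ⟶ Y⟦(1 : ℤ)⟧, f = 0
  tri₁ : ∀ ⦃M : C⦄, M ∈ H → ∃ (X Y : C) (_ : X ∈ A) (_ : Y ∈ B)
    (f : Y ⟶ X) (g : X ⟶ M) (h : M ⟶ Y⟦(1 : ℤ)⟧), Triangle.mk f g h ∈ distTriang C
  tri₂ : ∀ ⦃M : C⦄, M ∈ H → ∃ (X Y : C) (_ : X ∈ A) (_ : Y ∈ B)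
    (f : M ⟶ Y) (g : Y ⟶ X) (h : X ⟶ M⟦(1 : ℤ)⟧), Triangle.mk f g h ∈ distTriang C

/-- The closure of a class of objects under finite direct sums and direct summands. -/
inductive addClosure (X : Set C) : C → Prop
  | of {A : C} : A ∈ X → addClosure X A
  | sum {A B E : C} : addClosure X A → addClosure X B → IsBiprodDecomp A B E → addClosure X E
  | summand {A E : C} : addClosure X E → IsDirectSummand A E → addClosure X A

/-- `hatN M n` is `M ∗ ΣM ∗ ⋯ ∗ ΣⁿM`. -/
def hatN (M : Set C) : ℕ → Set C
  | 0 => M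
  | n + 1 => starSet (hatN M n) (shiftSet ((n : ℤ) + 1) M)

/-- `M^∧ = ⋃_{n ≥ 0} M ∗ ΣM ∗ ⋯ ∗ ΣⁿM`. -/
def hatSet (M : Set C) : Set C := ⋃ n : ℕ, hatN M n

/-- `veeN M n` is `Σ⁻ⁿM ∗ ⋯ ∗ Σ⁻¹M ∗ M`. -/
def veeN (M : Set C) : ℕ → Set C
  | 0 => M
  | n + 1 => starSet (shiftSet (-((n : ℤ) + 1)) M) (veeN M n)

/-- `M^∨ = ⋃_{n ≥ 0} Σ⁻ⁿM ∗ ⋯ ∗ Σ⁻¹M ∗ M`. -/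
def veeSet (M : Set C) : Set C := ⋃ n : ℕ, veeN M n

/-- `bandN M m n` is `Σ⁻ᵐM ∗ ⋯ ∗ M ∗ ΣM ∗ ⋯ ∗ ΣⁿM`. -/
def bandN (M : Set C) : ℕ → ℕ → Set C
  | 0, n => hatN M n
  | m + 1, n => starSet (shiftSet (-((m : ℤ) + 1)) M) (bandN M m n)

/-- A class of objects is closed under extensions. -/
def ExtClosed (S : Set C) : Prop := ∀ ⦃T : Triangle C⦄, T ∈ (distTriang C) →
  T.obj₁ ∈ S → T.obj₃ ∈ S → T.obj₂ ∈ S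

/-- A class of objects is closed under cones. -/
def ConesClosed (S : Set C) : Prop := ∀ ⦃T : Triangle C⦄, T ∈ (distTriang C) →
  T.obj₁ ∈ S → T.obj₂ ∈ S → T.obj₃ ∈ S

/-- A class of objects is closed under cocones. -/
def CoconesClosed (S : Set C) : Prop := ∀ ⦃T : Triangle C⦄, T ∈ (distTriang C) →
  T.obj₂ ∈ S → T.obj₃ ∈ S → T.obj₁ ∈ S

/-- The thick closure of a class of objects: the smallest class containing it which is
closed under extensions, cones, cocones and direct summands. -/
inductive thickClosure (X : Set C) : C → Prop
  | of {A : C} : A ∈ X → thickClosure X A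
  | ext {T : Triangle C} : T ∈ (distTriang C) → thickClosure X T.obj₁ → thickClosure X T.obj₃ →
      thickClosure X T.obj₂
  | cone {T : Triangle C} : T ∈ (distTriang C) → thickClosure X T.obj₁ → thickClosure X T.obj₂ →
      thickClosure X T.obj₃
  | cocone {T : Triangle C} : T ∈ (distTriang C) → thickClosure X T.obj₂ → thickClosure X T.obj₃ →
      thickClosure X T.obj₁
  | summand {A E : C} : thickClosure X E → IsDirectSummand A E → thickClosure X A

/-- A presilting subcategory. -/
def IsPresilting (M : Set C) : Prop :=
  SummandClosed M ∧
    ∀ ⦃A B : C⦄, A ∈ M → B ∈ M → ∀ k : ℤ, 1 ≤ k → ∀ f : A ⟶ B⟦k⟧, f = 0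

/-- A silting subcategory. -/
def IsSilting (M : Set C) : Prop := IsPresilting M ∧ ∀ A : C, thickClosure M A

/-- A co-t-structure `(U, V)` is bounded if `⋃ₙ ΣⁿU = D = ⋃ₙ ΣⁿV`. -/
def BoundedPair (U V : Set C) : Prop :=
  (⋃ n : ℤ, shiftSet n U) = (Set.univ : Set C) ∧ (⋃ n : ℤ, shiftSet n V) = (Set.univ : Set C)

section Aux

open ZeroObject

/-- Swapping the two summands of a biproduct decomposition. -/
lemma swap_biprod {A B E : C} (h : IsBiprodDecomp A B E) : IsBiprodDecomp B A E := by
  obtain ⟨i, j, p, q, h1, h2, h3, h4, h5⟩ := h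
  exact ⟨j, i, q, p, h2, h1, h4, h3, by rw [add_comm]; exact h5⟩

/-- A summand-closed class is closed under isomorphisms. -/
lemma summand_of_iso {S : Set C} (hS : SummandClosed S) {A E : C} (e : A ≅ E) (hE : E ∈ S) :
    A ∈ S := by
  refine hS hE ⟨0, e.hom, 0, e.inv, 0, by simp, ?_, by simp, by simp, by simp⟩
  simp [Limits.id_zero]

/-- A distinguished triangle with vanishing connecting morphism splits. -/
lemma split_of_mor₃_zero {T : Triangle C} (hT : T ∈ distTriang C) (hz : T.mor₃ = 0) :
    IsBiprodDecomp T.obj₁ T.obj₃ T.obj₂ := by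
  obtain ⟨s, hs⟩ := Triangle.coyoneda_exact₃ T hT (𝟙 T.obj₃) (by rw [hz, comp_zero])
  obtain ⟨r₀, hr⟩ := Triangle.yoneda_exact₂ _ (inv_rot_of_distTriang T hT) (𝟙 T.obj₁)
    (by simp [Triangle.invRotate, hz]; exact zero_comp)
  rw [Triangle.invRotate_mor₂] at hr
  let r : T.obj₂ ⟶ T.obj₁ := r₀
  have hs0 : s ≫ T.mor₂ = 𝟙 T.obj₃ := hs.symm
  have hip : T.mor₁ ≫ r = 𝟙 T.obj₁ := hr.symm
  have h12 := comp_distTriang_mor_zero₁₂ T hT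
  set s' : T.obj₃ ⟶ T.obj₂ := s - s ≫ r ≫ T.mor₁ with hs'
  have hjq : s' ≫ T.mor₂ = 𝟙 T.obj₃ := by
    have : (s ≫ r ≫ T.mor₁) ≫ T.mor₂ = 0 := by
      rw [Category.assoc, Category.assoc, h12, comp_zero, comp_zero]
    rw [hs', Preadditive.sub_comp, this, sub_zero, hs0]
  have hjp : s' ≫ r = 0 := by
    have : (s ≫ r ≫ T.mor₁) ≫ r = s ≫ r := by
      rw [Category.assoc, Category.assoc, hip, Category.comp_id]
    rw [hs', Preadditive.sub_comp, this, sub_self]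
  have key : r ≫ T.mor₁ + T.mor₂ ≫ s' = 𝟙 T.obj₂ := by
    set u : T.obj₂ ⟶ T.obj₂ := 𝟙 T.obj₂ - r ≫ T.mor₁ - T.mor₂ ≫ s' with hu
    have h1 : T.mor₁ ≫ u = 0 := by
      have e1 : T.mor₁ ≫ (r ≫ T.mor₁) = T.mor₁ := by
        rw [← Category.assoc, hip, Category.id_comp]
      have e2 : T.mor₁ ≫ (T.mor₂ ≫ s') = 0 := by
        rw [← Category.assoc, h12, zero_comp]
      rw [hu, Preadditive.comp_sub, Preadditive.comp_sub, e1, e2, Category.comp_id,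
        sub_self, zero_sub, neg_zero]
    obtain ⟨v, hv⟩ := Triangle.yoneda_exact₂ T hT u h1
    have hsu : s' ≫ u = 0 := by
      have e1 : s' ≫ (r ≫ T.mor₁) = 0 := by rw [← Category.assoc, hjp, zero_comp]
      have e2 : s' ≫ (T.mor₂ ≫ s') = s' := by rw [← Category.assoc, hjq, Category.id_comp]
      rw [hu, Preadditive.comp_sub, Preadditive.comp_sub, e1, e2, Category.comp_id,
        sub_zero, sub_self]
    have hv0 : v = 0 := by
      have h' : (s' ≫ T.mor₂) ≫ v = s' ≫ u := by rw [Category.assoc, ← hv]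
      rwa [hjq, Category.id_comp, hsu] at h'
    have hu0 : u = 0 := by rw [hv, hv0, comp_zero]
    have h0 : 𝟙 T.obj₂ - (r ≫ T.mor₁ + T.mor₂ ≫ s') = 0 := by
      rw [← sub_sub]; exact hu ▸ hu0
    rw [sub_eq_zero] at h0
    exact h0.symm
  exact ⟨T.mor₁, s', r, T.mor₂, hip, hjq, h12, hjp, key⟩

/-- `Hom(A⟦-1⟧, B)` vanishes if `Hom(A, B⟦1⟧)` does. -/
lemma shift_neg_hom_zero {A B : C} (h : ∀ f : A ⟶ B⟦(1 : ℤ)⟧, f = 0)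
    (g : A⟦(-1 : ℤ)⟧ ⟶ B) : g = 0 := by
  have e := (shiftFunctorCompIsoId C (-1 : ℤ) (1 : ℤ) (by omega)).app A
  have hg : e.inv ≫ (shiftFunctor C (1 : ℤ)).map g = 0 := h _
  have hzero : (shiftFunctor C (1 : ℤ)).map g = 0 := by
    have h2 : e.hom ≫ e.inv ≫ (shiftFunctor C (1 : ℤ)).map g =
        (shiftFunctor C (1 : ℤ)).map g := by rw [Iso.hom_inv_id_assoc]
    rw [hg, comp_zero] at h2
    exact h2.symm
  apply (shiftFunctor C (1 : ℤ)).map_injective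
  rw [hzero, Functor.map_zero]

/-- Two-out-of-three vanishing for maps into a distinguished triangle. -/
lemma hom_into_zero {T : Triangle C} (hT : T ∈ distTriang C) {W : C}
    (hone : ∀ f : W ⟶ T.obj₁, f = 0) (hthree : ∀ f : W ⟶ T.obj₃, f = 0)
    (f : W ⟶ T.obj₂) : f = 0 := by
  obtain ⟨g, hg⟩ := Triangle.coyoneda_exact₂ T hT f (hthree _)
  rw [hg, hone g, zero_comp]

/-- Two-out-of-three vanishing for maps out of a distinguished triangle. -/
lemma hom_out_zero {T : Triangle C} (hT : T ∈ distTriang C) {W : C}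
    (hone : ∀ f : T.obj₁ ⟶ W, f = 0) (hthree : ∀ f : T.obj₃ ⟶ W, f = 0)
    (f : T.obj₂ ⟶ W) : f = 0 := by
  obtain ⟨g, hg⟩ := Triangle.yoneda_exact₂ T hT f (hone _)
  rw [hg, hthree g, comp_zero]

/-- Transport of hom-vanishing along an isomorphism (incoming maps). -/
lemma hom_into_of_iso {A B W : C} (e : A ≅ B) (h : ∀ f : W ⟶ B, f = 0) (f : W ⟶ A) : f = 0 := by
  rw [← Category.comp_id f, ← e.hom_inv_id, ← Category.assoc, h (f ≫ e.hom), zero_comp]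

/-- Transport of hom-vanishing along an isomorphism (outgoing maps). -/
lemma hom_out_of_iso {A B W : C} (e : A ≅ B) (h : ∀ f : B ⟶ W, f = 0) (f : A ⟶ W) : f = 0 := by
  rw [← Category.id_comp f, ← e.hom_inv_id, Category.assoc, h (e.inv ≫ f), comp_zero]

/-- The coaisle of a co-t-structure is closed under the positive shift. -/
lemma IsCoTStructure.shift_mem {U V : Set C} (h : IsCoTStructure U V) {B : C} (hB : B ∈ V) :
    B⟦(1 : ℤ)⟧ ∈ V := by
  obtain ⟨A₀, B₀, hA₀, hB₀, f, g, w, hdt⟩ := h.cover (B⟦(1 : ℤ)⟧)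
  have hf : f = 0 := h.hom_zero (h.shift_le hA₀) hB f
  have hz : (Triangle.mk f g w).rotate.mor₃ = 0 := by
    simp [Triangle.rotate, hf]
    exact neg_eq_zero.mpr (Functor.map_zero _ _ _)
  exact h.summand_V hB₀ ⟨_, split_of_mor₃_zero (rot_of_distTriang _ hdt) hz⟩

/-- The orthogonality characterization of the aisle of a co-t-structure. -/
lemma IsCoTStructure.mem_U {U V : Set C} (h : IsCoTStructure U V) {A : C}
    (hA : ∀ ⦃B : C⦄, B ∈ V → ∀ f : A ⟶ B⟦(1 : ℤ)⟧, f = 0) : A ∈ U := by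
  obtain ⟨A₀, B₀, hA₀, hB₀, f, g, w, hdt⟩ := h.cover (A⟦(-1 : ℤ)⟧)
  have e : (A⟦(-1 : ℤ)⟧)⟦(1 : ℤ)⟧ ≅ A :=
    (shiftFunctorCompIsoId C (-1 : ℤ) (1 : ℤ) (by omega)).app A
  have hg : (shiftFunctor C (1 : ℤ)).map g = 0 := by
    have h0 : e.inv ≫ (shiftFunctor C (1 : ℤ)).map g = 0 := hA hB₀ _
    have h2 : e.hom ≫ e.inv ≫ (shiftFunctor C (1 : ℤ)).map g =
        (shiftFunctor C (1 : ℤ)).map g := by rw [Iso.hom_inv_id_assoc]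
    rw [h0, comp_zero] at h2
    exact h2.symm
  have hz : (Triangle.mk f g w).rotate.rotate.mor₃ = 0 := by
    simp [Triangle.rotate, hg]
    exact neg_eq_zero.mpr hg
  have hsplit := swap_biprod
    (split_of_mor₃_zero (rot_of_distTriang _ (rot_of_distTriang _ hdt)) hz)
  obtain ⟨U₀, hU₀, ⟨eA⟩⟩ := hA₀
  have hA₀U : A₀⟦(1 : ℤ)⟧ ∈ U := summand_of_iso h.summand_U
    ((shiftFunctor C (1 : ℤ)).mapIso eA ≪≫
      (shiftFunctorCompIsoId C (-1 : ℤ) (1 : ℤ) (by omega)).app U₀) hU₀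
  exact summand_of_iso h.summand_U e.symm (h.summand_U hA₀U ⟨_, hsplit⟩)

/-- The orthogonality characterization of the coaisle of a co-t-structure. -/
lemma IsCoTStructure.mem_V {U V : Set C} (h : IsCoTStructure U V) {B : C}
    (hB : ∀ ⦃A : C⦄, A ∈ U → ∀ f : A ⟶ B⟦(1 : ℤ)⟧, f = 0) : B ∈ V := by
  obtain ⟨A₀, B₀, hA₀, hB₀, f, g, w, hdt⟩ := h.cover B
  obtain ⟨U₀, hU₀, ⟨eA⟩⟩ := hA₀
  have hf : f = 0 :=
    hom_out_of_iso eA (fun f' => shift_neg_hom_zero (fun f'' => hB hU₀ f'') f') f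
  have hz : (Triangle.mk f g w).rotate.mor₃ = 0 := by
    simp [Triangle.rotate, hf]
    exact neg_eq_zero.mpr (Functor.map_zero _ _ _)
  exact h.summand_V hB₀ ⟨_, split_of_mor₃_zero (rot_of_distTriang _ hdt) hz⟩

end Aux

/-- Theorem: if `(X,Y)` is a cotorsion pair in `D` with `V₁ ⊆ Y ⊆ V₂`, then
`(X ∩ V₂, U₁ ∩ Y)` is a cotorsion pair in the coheart `H = U₁ ∩ V₂`. -/
theorem stmt1 {U₁ V₁ U₂ V₂ : Set C}
    (h₁ : IsCoTStructure U₁ V₁) (h₂ : IsCoTStructure U₂ V₂) (hV : V₁ ⊆ V₂)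
    {X Y : Set C} (hXY : IsCotorsionPair X Y) (hY₁ : V₁ ⊆ Y) (hY₂ : Y ⊆ V₂) :
    IsCotorsionPairIn (U₁ ∩ V₂) (X ∩ V₂) (U₁ ∩ Y) := by
  have hXU₁ : X ⊆ U₁ := fun A hA => h₁.mem_U (fun B hB f => hXY.hom_zero hA (hY₁ hB) f)
  refine ⟨?_, ?_, ?_, ?_, ?_, ?_, ?_⟩
  · rintro A ⟨hAX, hAV⟩
    exact ⟨hXU₁ hAX, hAV⟩
  · rintro B ⟨hBU, hBY⟩
    exact ⟨hBU, hY₂ hBY⟩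
  · rintro Z E ⟨hEX, hEV⟩ ⟨hZH, B₀, hB₀, hdec⟩
    exact ⟨hXY.summand_X hEX ⟨_, hdec⟩, hZH.2⟩
  · rintro Z E ⟨hEU, hEY⟩ ⟨hZH, B₀, hB₀, hdec⟩
    exact ⟨hZH.1, hXY.summand_Y hEY ⟨_, hdec⟩⟩
  · rintro Z W ⟨hZX, _⟩ ⟨_, hWY⟩ f
    exact hXY.hom_zero hZX hWY f
  · -- first triangle
    rintro M ⟨hMU, hMV⟩
    obtain ⟨A', B', hA', hB', f, g, w, hdt⟩ := hXY.cover₁ M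
    obtain ⟨Y₀', hY₀', ⟨eB⟩⟩ := hB'
    set T := Triangle.mk f g w with hT
    have hdt' := inv_rot_of_distTriang T hdt
    have eY : B'⟦(-1 : ℤ)⟧ ≅ Y₀' :=
      (shiftFunctor C (-1 : ℤ)).mapIso eB ≪≫
        (shiftFunctorCompIsoId C (1 : ℤ) (-1 : ℤ) (by omega)).app Y₀'
    have hY₀Y : B'⟦(-1 : ℤ)⟧ ∈ Y := summand_of_iso hXY.summand_Y eY hY₀'
    have hA'V₂ : A' ∈ V₂ := by
      apply h₂.mem_V
      intro U hU φ
      exact hom_into_zero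
        (rot_of_distTriang _ (rot_of_distTriang _ (rot_of_distTriang _ hdt')))
        (fun ψ => hom_into_of_iso
          ((shiftFunctorCompIsoId C (-1 : ℤ) (1 : ℤ) (by omega)).app B' ≪≫ eB)
          (fun χ => h₂.hom_zero hU (hY₂ hY₀') χ) ψ)
        (fun ψ => h₂.hom_zero hU hMV ψ) φ
    have hY₀U₁ : B'⟦(-1 : ℤ)⟧ ∈ U₁ := by
      apply h₁.mem_U
      intro V hV φ
      exact hom_out_zero (inv_rot_of_distTriang _ hdt')
        (fun ψ => shift_neg_hom_zero (fun χ => h₁.hom_zero hMU (h₁.shift_mem hV) χ) ψ)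
        (fun ψ => hXY.hom_zero hA' (hY₁ hV) ψ) φ
    exact ⟨A', B'⟦(-1 : ℤ)⟧, ⟨hA', hA'V₂⟩, ⟨hY₀U₁, hY₀Y⟩,
      T.invRotate.mor₁, T.invRotate.mor₂, T.invRotate.mor₃, hdt'⟩
  · -- second triangle
    rintro M ⟨hMU, hMV⟩
    obtain ⟨A₀, B₀, hA₀, hB₀, f, g, w, hdt⟩ := hXY.cover₂ M
    obtain ⟨X', hX', ⟨eA⟩⟩ := hA₀
    set T := Triangle.mk f g w with hT
    have hdt' := rot_of_distTriang T hdt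
    have eX : A₀⟦(1 : ℤ)⟧ ≅ X' :=
      (shiftFunctor C (1 : ℤ)).mapIso eA ≪≫
        (shiftFunctorCompIsoId C (-1 : ℤ) (1 : ℤ) (by omega)).app X'
    have hX₀X : A₀⟦(1 : ℤ)⟧ ∈ X := summand_of_iso hXY.summand_X eX hX'
    have hX₀V₂ : A₀⟦(1 : ℤ)⟧ ∈ V₂ := by
      apply h₂.mem_V
      intro U hU φ
      exact hom_into_zero
        (rot_of_distTriang _ (rot_of_distTriang _ (rot_of_distTriang _
          (rot_of_distTriang _ hdt'))))
        (fun ψ => h₂.hom_zero hU (hY₂ hB₀) ψ)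
        (fun ψ => h₂.hom_zero hU (h₂.shift_mem hMV) ψ) φ
    have hB₀U₁ : B₀ ∈ U₁ := by
      apply h₁.mem_U
      intro V hV φ
      exact hom_out_zero hdt'
        (fun ψ => h₁.hom_zero hMU hV ψ)
        (fun ψ => hom_out_of_iso eX (fun χ => hXY.hom_zero hX' (hY₁ hV) χ) ψ) φ
    exact ⟨A₀⟦(1 : ℤ)⟧, B₀, ⟨hX₀X, hX₀V₂⟩, ⟨hB₀U₁, hB₀⟩,
      T.rotate.mor₁, T.rotate.mor₂, T.rotate.mor₃, hdt'⟩
end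

section
/- Let D be a triangulated category with shift functor Σ and let (U,V) be a bounded co-t-structure on D. Then M := U ∩ V is a silting subcategory of D, and moreover U = M^∨ and V = M^∧. -/
open CategoryTheory Limits Pretriangulated

universe v u

variable {C : Type u} [Category.{v} C] [Preadditive C] [HasZeroObject C]
  [HasShift C ℤ] [∀ n : ℤ, (CategoryTheory.shiftFunctor C n).Additive] [Pretriangulated C]

/-! ### Auxiliary lemmas -/

open ZeroObject

section Auxiliary

set_option linter.unusedSectionVars false

lemma isDirectSummand_of_iso {A E : C} (e : A ≅ E) : IsDirectSummand A E := by
  refine ⟨0, e.hom, 0, e.inv, 0, by simp, (isZero_zero C).eq_of_src _ _, by simp, by simp, by simp⟩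

lemma zero_isDirectSummand (E : C) : IsDirectSummand (0 : C) E := by
  refine ⟨E, 0, 𝟙 E, 0, 𝟙 E, (isZero_zero C).eq_of_src _ _, by simp, by simp, by simp, by simp⟩

lemma SummandClosed.mem_iso {S : Set C} (hS : SummandClosed S) {A B : C} (e : A ≅ B)
    (hB : B ∈ S) : A ∈ S :=
  hS hB (isDirectSummand_of_iso e)

/-- Composition of shifts, as an isomorphism. -/
noncomputable def sh (X : C) (a b c : ℤ) (hc : a + b = c) : (X⟦a⟧)⟦b⟧ ≅ X⟦c⟧ :=
  ((shiftFunctorAdd' C a b c hc).app X).symm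

/-- The zero-th shift, as an isomorphism. -/
noncomputable def sh0 (X : C) : X⟦(0:ℤ)⟧ ≅ X := (shiftFunctorZero C ℤ).app X

lemma split_abstract {A X Bm : C} (f : A ⟶ X) (s : X ⟶ A) (j : Bm ⟶ A) (q : A ⟶ Bm)
    (hs : s ≫ f = 𝟙 X) (hjf : j ≫ f = 0) (hq : q ≫ j = 𝟙 A - f ≫ s)
    (hmono : ∀ {W : C} (g : W ⟶ Bm), g ≫ j = 0 → g = 0) : IsBiprodDecomp X Bm A := by
  have hjq : j ≫ q = 𝟙 Bm := by
    have h0 : (j ≫ q - 𝟙 Bm) ≫ j = 0 := by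
      rw [Preadditive.sub_comp, Category.id_comp, Category.assoc, hq, Preadditive.comp_sub,
        Category.comp_id, ← Category.assoc, hjf, zero_comp, sub_zero, sub_self]
    have := hmono _ h0
    rwa [sub_eq_zero] at this
  have hsq : s ≫ q = 0 := by
    apply hmono
    rw [Category.assoc, hq, Preadditive.comp_sub, Category.comp_id, ← Category.assoc, hs,
      Category.id_comp, sub_self]
  exact ⟨s, j, f, q, hs, hjq, hsq, hjf, by rw [hq]; abel⟩

lemma split_abstract' {X Bo Sh : C} (i : X ⟶ Bo) (p : Bo ⟶ X) (q : Bo ⟶ Sh) (j : Sh ⟶ Bo)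
    (hip : i ≫ p = 𝟙 X) (hiq : i ≫ q = 0) (hj : q ≫ j = 𝟙 Bo - p ≫ i)
    (hepi : ∀ {W : C} (g : Sh ⟶ W), q ≫ g = 0 → g = 0) : IsBiprodDecomp X Sh Bo := by
  have hjq : j ≫ q = 𝟙 Sh := by
    have h0 : q ≫ (j ≫ q - 𝟙 Sh) = 0 := by
      rw [Preadditive.comp_sub, Category.comp_id, ← Category.assoc, hj, Preadditive.sub_comp,
        Category.id_comp, Category.assoc, hiq, comp_zero, sub_zero, sub_self]
    have := hepi _ h0
    rwa [sub_eq_zero] at this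
  have hjp : j ≫ p = 0 := by
    apply hepi
    rw [← Category.assoc, hj, Preadditive.sub_comp, Category.id_comp, Category.assoc, hip,
      Category.comp_id, sub_self]
  exact ⟨i, j, p, q, hip, hjq, hiq, hjp, by rw [hj]; abel⟩

/-- A triangle whose second morphism vanishes exhibits `obj₂` as a summand of `obj₁`. -/
lemma split_of_mor₂_zero {T : Triangle C} (hT : T ∈ distTriang C) (hg : T.mor₂ = 0) :
    IsDirectSummand T.obj₂ T.obj₁ := by
  obtain ⟨s, hs⟩ := Triangle.coyoneda_exact₂ T hT (𝟙 T.obj₂) (by rw [Category.id_comp, hg])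
  have hT' := inv_rot_of_distTriang T hT
  obtain ⟨q, hq⟩ := Triangle.coyoneda_exact₂ _ hT' (𝟙 T.obj₁ - T.mor₁ ≫ s)
    (by
      show (𝟙 T.obj₁ - T.mor₁ ≫ s) ≫ T.mor₁ = 0
      rw [Preadditive.sub_comp, Category.id_comp, Category.assoc, ← hs, Category.comp_id,
        sub_self])
  have hT'' := inv_rot_of_distTriang _ hT'
  refine ⟨T.obj₃⟦(-1:ℤ)⟧, split_abstract T.mor₁ s T.invRotate.mor₁ q hs.symm
    (comp_distTriang_mor_zero₁₂ _ hT') hq.symm ?_⟩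
  intro W g hg0
  obtain ⟨t, ht⟩ := Triangle.coyoneda_exact₂ _ hT'' g hg0
  have hz : T.invRotate.invRotate.mor₁ = 0 := by simp [hg]; erw [Functor.map_zero, zero_comp, neg_zero]; rfl
  rw [ht, hz, comp_zero]; rfl

/-- A triangle whose first morphism vanishes exhibits `obj₂` as a summand of `obj₃`. -/
lemma split_of_mor₁_zero {T : Triangle C} (hT : T ∈ distTriang C) (hf : T.mor₁ = 0) :
    IsDirectSummand T.obj₂ T.obj₃ := by
  obtain ⟨r, hr⟩ := Triangle.yoneda_exact₂ T hT (𝟙 T.obj₂) (by rw [Category.comp_id, hf])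
  obtain ⟨j, hj⟩ := Triangle.yoneda_exact₃ T hT (𝟙 T.obj₃ - r ≫ T.mor₂)
    (by rw [Preadditive.comp_sub, Category.comp_id, ← Category.assoc, ← hr, Category.id_comp,
      sub_self])
  have hTr := rot_of_distTriang T hT
  refine ⟨T.obj₁⟦(1:ℤ)⟧, split_abstract' T.mor₂ r T.mor₃ j hr.symm
    (comp_distTriang_mor_zero₂₃ _ hT) hj.symm ?_⟩
  intro W g hg0
  obtain ⟨t, ht⟩ := Triangle.yoneda_exact₃ _ hTr g hg0
  have hz : T.rotate.mor₃ = 0 := by simp [hf]; rfl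
  rw [ht, hz, zero_comp]; rfl

lemma mem_starSet {X Y : Set C} {T : Triangle C} (hT : T ∈ distTriang C)
    (h₁ : T.obj₁ ∈ X) (h₃ : T.obj₃ ∈ Y) : T.obj₂ ∈ starSet X Y :=
  ⟨T.obj₁, T.obj₃, h₁, h₃, T.mor₁, T.mor₂, T.mor₃, hT⟩

lemma dist_iso₂ {T : Triangle C} (hT : T ∈ distTriang C) {X : C} (e : T.obj₂ ≅ X) :
    Triangle.mk (T.mor₁ ≫ e.hom) (e.inv ≫ T.mor₂) T.mor₃ ∈ distTriang C :=
  isomorphic_distinguished _ hT _ (Triangle.isoMk _ _ (Iso.refl T.obj₁) e.symm (Iso.refl T.obj₃)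
    (by show (T.mor₁ ≫ e.hom) ≫ e.inv = 𝟙 T.obj₁ ≫ T.mor₁; simp)
    (by show (e.inv ≫ T.mor₂) ≫ 𝟙 T.obj₃ = e.inv ≫ T.mor₂; simp)
    (by show T.mor₃ ≫ (shiftFunctor C 1).map (𝟙 T.obj₁) = 𝟙 T.obj₃ ≫ T.mor₃; simp))

variable {U V : Set C}

lemma shiftU (h : IsCoTStructure U V) : ∀ (n : ℕ) {A : C}, A ∈ U → A⟦(-(n:ℤ))⟧ ∈ U := by
  intro n
  induction n with
  | zero =>
    intro A hA
    simp only [Nat.cast_zero, neg_zero]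
    exact h.summand_U.mem_iso (sh0 A) hA
  | succ n ih =>
    intro A hA
    have h1 : (A⟦(-(n:ℤ))⟧)⟦(-1:ℤ)⟧ ∈ U := h.shift_le ⟨A⟦(-(n:ℤ))⟧, ih hA, ⟨Iso.refl _⟩⟩
    exact h.summand_U.mem_iso
      ((sh A (-(n:ℤ)) (-1) (-((n+1:ℕ):ℤ)) (by push_cast; ring)).symm) h1

lemma shiftUZ (h : IsCoTStructure U V) {A : C} {m : ℤ} (hm : m ≤ 0) (hA : A ∈ U) :
    A⟦m⟧ ∈ U := by
  obtain ⟨k, rfl⟩ := Int.exists_eq_neg_ofNat hm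
  exact shiftU h k hA

lemma V_mem_of_hom (h : IsCoTStructure U V) {X : C}
    (hX : ∀ ⦃A : C⦄, A ∈ U → ∀ f : A ⟶ X⟦(1:ℤ)⟧, f = 0) : X ∈ V := by
  obtain ⟨A, B, hA, hB, f, g, h', hT⟩ := h.cover X
  obtain ⟨U₀, hU₀, ⟨e⟩⟩ := hA
  have E : (U₀⟦(-1:ℤ)⟧)⟦(1:ℤ)⟧ ≅ U₀ := sh U₀ (-1) 1 0 (by ring) ≪≫ sh0 U₀
  have hφ := hX hU₀ (E.inv ≫ (e.inv ≫ f)⟦(1:ℤ)⟧')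
  have hmap : (e.inv ≫ f)⟦(1:ℤ)⟧' = 0 := by
    rw [← Category.id_comp ((e.inv ≫ f)⟦(1:ℤ)⟧'), ← E.hom_inv_id, Category.assoc, hφ, comp_zero]
  have hef : e.inv ≫ f = 0 :=
    (shiftFunctor C (1:ℤ)).map_injective (by rw [hmap, Functor.map_zero])
  have hf : f = 0 := by
    rw [← Category.id_comp f, ← e.hom_inv_id, Category.assoc, hef, comp_zero]
  exact h.summand_V hB (split_of_mor₁_zero hT hf)

lemma shiftV1 (h : IsCoTStructure U V) {X : C} (hX : X ∈ V) : X⟦(1:ℤ)⟧ ∈ V := by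
  apply V_mem_of_hom h
  intro A hA f
  have E : ((X⟦(1:ℤ)⟧)⟦(1:ℤ)⟧)⟦(-1:ℤ)⟧ ≅ X⟦(1:ℤ)⟧ := sh (X⟦(1:ℤ)⟧) 1 (-1) 0 (by ring) ≪≫ sh0 _
  have hA1 : A⟦(-1:ℤ)⟧ ∈ U := h.shift_le ⟨A, hA, ⟨Iso.refl _⟩⟩
  have hφ := h.hom_zero hA1 hX (f⟦(-1:ℤ)⟧' ≫ E.hom)
  have hmap : f⟦(-1:ℤ)⟧' = 0 := by
    rw [← Category.comp_id (f⟦(-1:ℤ)⟧'), ← E.hom_inv_id, ← Category.assoc, hφ, zero_comp]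
  exact (shiftFunctor C (-1:ℤ)).map_injective (by rw [hmap, Functor.map_zero])

lemma shiftV (h : IsCoTStructure U V) : ∀ (n : ℕ) {A : C}, A ∈ V → A⟦(n:ℤ)⟧ ∈ V := by
  intro n
  induction n with
  | zero =>
    intro A hA
    simp only [Nat.cast_zero]
    exact h.summand_V.mem_iso (sh0 A) hA
  | succ n ih =>
    intro A hA
    exact h.summand_V.mem_iso ((sh A (n:ℤ) 1 (((n+1:ℕ)):ℤ) (by push_cast; ring)).symm)
      (shiftV1 h (ih hA))

lemma shiftVZ (h : IsCoTStructure U V) {A : C} {m : ℤ} (hm : 0 ≤ m) (hA : A ∈ V) :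
    A⟦m⟧ ∈ V := by
  obtain ⟨k, rfl⟩ := Int.eq_ofNat_of_zero_le hm
  exact shiftV h k hA

lemma hom_zero_le (h : IsCoTStructure U V) {A B : C} (hA : A ∈ U) (hB : B ∈ V) (k : ℤ)
    (hk : 1 ≤ k) (f : A ⟶ B⟦k⟧) : f = 0 := by
  have hB' : B⟦k-1⟧ ∈ V := shiftVZ h (by omega) hB
  have E : (B⟦k-1⟧)⟦(1:ℤ)⟧ ≅ B⟦k⟧ := sh B (k-1) 1 k (by ring)
  have hφ := h.hom_zero hA hB' (f ≫ E.inv)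
  rw [← Category.comp_id f, ← E.inv_hom_id, ← Category.assoc, hφ, zero_comp]

lemma U_mem_of_hom (h : IsCoTStructure U V) {X : C}
    (hX : ∀ ⦃B : C⦄, B ∈ V → ∀ f : X ⟶ B⟦(1:ℤ)⟧, f = 0) : X ∈ U := by
  obtain ⟨A, B, hA, hB, f, g, h', hT⟩ := h.cover (X⟦(-1:ℤ)⟧)
  have hT1 := Triangle.shift_distinguished (Triangle.mk f g h') hT 1
  have E : (X⟦(-1:ℤ)⟧)⟦(1:ℤ)⟧ ≅ X := sh X (-1) 1 0 (by ring) ≪≫ sh0 X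
  have hg1 : g⟦(1:ℤ)⟧' = 0 := by
    have hφ := hX hB (E.inv ≫ g⟦(1:ℤ)⟧')
    rw [← Category.id_comp (g⟦(1:ℤ)⟧'), ← E.hom_inv_id, Category.assoc, hφ, comp_zero]
  have hm2 : ((Triangle.shiftFunctor C (1:ℤ)).obj (Triangle.mk f g h')).mor₂ = 0 := by
    simp [Triangle.shiftFunctor]; erw [hg1]; exact neg_zero
  have hsum := split_of_mor₂_zero hT1 hm2
  obtain ⟨U₀, hU₀, ⟨e⟩⟩ := hA
  have hA1 : A⟦(1:ℤ)⟧ ∈ U := h.summand_U.mem_iso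
    ((shiftFunctor C (1:ℤ)).mapIso e ≪≫ (sh U₀ (-1) 1 0 (by ring) ≪≫ sh0 U₀)) hU₀
  exact h.summand_U.mem_iso E.symm (h.summand_U hA1 hsum)

lemma V_ext (h : IsCoTStructure U V) {T : Triangle C} (hT : T ∈ distTriang C)
    (h1 : T.obj₁ ∈ V) (h3 : T.obj₃ ∈ V) : T.obj₂ ∈ V := by
  apply V_mem_of_hom h
  intro A hA f
  have hT1 := Triangle.shift_distinguished T hT 1
  have h0 : f ≫ ((Triangle.shiftFunctor C (1:ℤ)).obj T).mor₂ = 0 := h.hom_zero hA h3 _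
  obtain ⟨g, hgf⟩ := Triangle.coyoneda_exact₂ _ hT1 f h0
  rw [hgf, h.hom_zero hA h1 g]; exact zero_comp

lemma U_ext (h : IsCoTStructure U V) {T : Triangle C} (hT : T ∈ distTriang C)
    (h1 : T.obj₁ ∈ U) (h3 : T.obj₃ ∈ U) : T.obj₂ ∈ U := by
  apply U_mem_of_hom h
  intro B hB f
  obtain ⟨g, hg⟩ := Triangle.yoneda_exact₂ T hT f (h.hom_zero h1 hB _)
  rw [hg, h.hom_zero h3 hB g, comp_zero]

lemma zero_mem (h : IsCoTStructure U V) : (0:C) ∈ U ∩ V := by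
  obtain ⟨A, B, hA, hB, f, g, h', hT⟩ := h.cover (0:C)
  exact ⟨h.summand_U (h.shift_le hA) (zero_isDirectSummand A),
    h.summand_V hB (zero_isDirectSummand B)⟩

lemma hatMain (h : IsCoTStructure U V) :
    ∀ (n : ℕ) (X : C), X ∈ V → X⟦(-(n:ℤ))⟧ ∈ U → X ∈ hatN (U ∩ V) n := by
  intro n
  induction n with
  | zero =>
    intro X hXV hXU
    simp only [Nat.cast_zero, neg_zero] at hXU
    exact ⟨h.summand_U.mem_iso (sh0 X).symm hXU, hXV⟩
  | succ n ih =>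
    intro X hXV hXU
    rw [show (-((n+1:ℕ):ℤ)) = -((n:ℤ)+1) by push_cast; ring] at hXU
    obtain ⟨A, B, hA, hB, f, g, h', hT⟩ := h.cover (X⟦(-((n:ℤ)+1))⟧)
    obtain ⟨U₀, hU₀, ⟨e⟩⟩ := hA
    have hA1 : A⟦(1:ℤ)⟧ ∈ U := h.summand_U.mem_iso
      ((shiftFunctor C (1:ℤ)).mapIso e ≪≫ (sh U₀ (-1) 1 0 (by ring) ≪≫ sh0 U₀)) hU₀
    have hBU : B ∈ U := U_ext h (rot_of_distTriang _ hT) hXU hA1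
    have hT2 := Triangle.shift_distinguished (Triangle.mk f g h') hT ((n:ℤ)+1)
    have hAmV : A⟦(n:ℤ)+1⟧ ∈ V := by
      refine V_ext h (inv_rot_of_distTriang _ hT2) ?_ ?_
      · exact h.summand_V.mem_iso (sh B ((n:ℤ)+1) (-1) (n:ℤ) (by ring)) (shiftV h n hB)
      · exact h.summand_V.mem_iso (sh X (-((n:ℤ)+1)) ((n:ℤ)+1) 0 (by ring) ≪≫ sh0 X) hXV
    have hAmU : (A⟦(n:ℤ)+1⟧)⟦(-(n:ℤ))⟧ ∈ U :=
      h.summand_U.mem_iso (sh A ((n:ℤ)+1) (-(n:ℤ)) 1 (by ring)) hA1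
    have hind := ih (A⟦(n:ℤ)+1⟧) hAmV hAmU
    have e2 : (X⟦(-((n:ℤ)+1))⟧)⟦(n:ℤ)+1⟧ ≅ X := sh X (-((n:ℤ)+1)) ((n:ℤ)+1) 0 (by ring) ≪≫ sh0 X
    have hT3 := dist_iso₂ hT2 e2
    simp only [hatN]
    exact mem_starSet hT3 hind ⟨B, ⟨hBU, hB⟩, ⟨Iso.refl _⟩⟩

lemma veeMain (h : IsCoTStructure U V) :
    ∀ (n : ℕ) (X : C), X ∈ U → X⟦(n:ℤ)⟧ ∈ V → X ∈ veeN (U ∩ V) n := by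
  intro n
  induction n with
  | zero =>
    intro X hXU hXV
    simp only [Nat.cast_zero] at hXV
    exact ⟨hXU, h.summand_V.mem_iso (sh0 X).symm hXV⟩
  | succ n ih =>
    intro X hXU hXV
    rw [show (((n+1:ℕ)):ℤ) = (n:ℤ)+1 by push_cast; ring] at hXV
    obtain ⟨A, B, hA, hB, f, g, h', hT⟩ := h.cover (X⟦(n:ℤ)⟧)
    obtain ⟨U₀, hU₀, ⟨e⟩⟩ := hA
    have hA1U : A⟦(1:ℤ)⟧ ∈ U := h.summand_U.mem_iso
      ((shiftFunctor C (1:ℤ)).mapIso e ≪≫ (sh U₀ (-1) 1 0 (by ring) ≪≫ sh0 U₀)) hU₀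
    have hT1 := Triangle.shift_distinguished (Triangle.mk f g h') hT 1
    have hA1V : A⟦(1:ℤ)⟧ ∈ V := by
      refine V_ext h (inv_rot_of_distTriang _ hT1) ?_ ?_
      · exact h.summand_V.mem_iso (sh B 1 (-1) 0 (by ring) ≪≫ sh0 B) hB
      · exact h.summand_V.mem_iso (sh X (n:ℤ) 1 ((n:ℤ)+1) rfl) hXV
    have hT4 := Triangle.shift_distinguished (Triangle.mk f g h') hT (-(n:ℤ))
    have hBnU : B⟦(-(n:ℤ))⟧ ∈ U := by
      refine U_ext h (rot_of_distTriang _ hT4) ?_ ?_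
      · exact h.summand_U.mem_iso (sh X (n:ℤ) (-(n:ℤ)) 0 (by ring) ≪≫ sh0 X) hXU
      · exact h.summand_U.mem_iso
          (sh A (-(n:ℤ)) 1 (1-(n:ℤ)) (by ring) ≪≫ (sh A 1 (-(n:ℤ)) (1-(n:ℤ)) (by ring)).symm)
          (shiftU h n hA1U)
    have hBnV : (B⟦(-(n:ℤ))⟧)⟦(n:ℤ)⟧ ∈ V :=
      h.summand_V.mem_iso (sh B (-(n:ℤ)) (n:ℤ) 0 (by ring) ≪≫ sh0 B) hB
    have hind := ih (B⟦(-(n:ℤ))⟧) hBnU hBnV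
    have e2 : (X⟦(n:ℤ)⟧)⟦(-(n:ℤ))⟧ ≅ X := sh X (n:ℤ) (-(n:ℤ)) 0 (by ring) ≪≫ sh0 X
    have hT5 := dist_iso₂ hT4 e2
    simp only [veeN]
    exact mem_starSet hT5
      ⟨A⟦(1:ℤ)⟧, ⟨hA1U, hA1V⟩, ⟨(sh A 1 (-((n:ℤ)+1)) (-(n:ℤ)) (by ring)).symm⟩⟩ hind

lemma hatN_sub_V (h : IsCoTStructure U V) : ∀ n : ℕ, hatN (U ∩ V) n ⊆ V := by
  intro n
  induction n with
  | zero => exact fun X hX => hX.2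
  | succ n ih =>
    intro X hX
    simp only [hatN] at hX
    obtain ⟨A, B, hA, hB, f, g, h', hT⟩ := hX
    obtain ⟨M₀, hM₀, ⟨e⟩⟩ := hB
    have hBV : B ∈ V := h.summand_V.mem_iso e (shiftVZ h (by positivity) hM₀.2)
    exact V_ext h hT (ih hA) hBV

lemma veeN_sub_U (h : IsCoTStructure U V) : ∀ n : ℕ, veeN (U ∩ V) n ⊆ U := by
  intro n
  induction n with
  | zero => exact fun X hX => hX.1
  | succ n ih =>
    intro X hX
    simp only [veeN] at hX
    obtain ⟨A, B, hA, hB, f, g, h', hT⟩ := hX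
    obtain ⟨M₀, hM₀, ⟨e⟩⟩ := hA
    have hAU : A ∈ U := h.summand_U.mem_iso e (shiftUZ h (by omega) hM₀.1)
    exact U_ext h hT hAU (ih hB)

lemma exU (h : IsCoTStructure U V) (hb : BoundedPair U V) (X : C) :
    ∃ n : ℕ, X⟦(-(n:ℤ))⟧ ∈ U := by
  have hX : X ∈ ⋃ n : ℤ, shiftSet n U := by rw [hb.1]; trivial
  obtain ⟨m, hm⟩ := Set.mem_iUnion.mp hX
  obtain ⟨U₀, hU₀, ⟨e⟩⟩ := hm
  rcases le_or_gt 0 m with hm0 | hm0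
  · obtain ⟨k, rfl⟩ := Int.eq_ofNat_of_zero_le hm0
    refine ⟨k, h.summand_U.mem_iso ?_ hU₀⟩
    exact (shiftFunctor C (-(k:ℤ))).mapIso e ≪≫ sh U₀ (k:ℤ) (-(k:ℤ)) 0 (by ring) ≪≫ sh0 U₀
  · have hXU : X ∈ U := h.summand_U.mem_iso e (shiftUZ h hm0.le hU₀)
    refine ⟨0, ?_⟩
    simp only [Nat.cast_zero, neg_zero]
    exact h.summand_U.mem_iso (sh0 X) hXU

lemma exV (h : IsCoTStructure U V) (hb : BoundedPair U V) (X : C) :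
    ∃ n : ℕ, X⟦(n:ℤ)⟧ ∈ V := by
  have hX : X ∈ ⋃ n : ℤ, shiftSet n V := by rw [hb.2]; trivial
  obtain ⟨m, hm⟩ := Set.mem_iUnion.mp hX
  obtain ⟨V₀, hV₀, ⟨e⟩⟩ := hm
  rcases le_or_gt m 0 with hm0 | hm0
  · obtain ⟨k, rfl⟩ := Int.exists_eq_neg_ofNat hm0
    refine ⟨k, h.summand_V.mem_iso ?_ hV₀⟩
    exact (shiftFunctor C (k:ℤ)).mapIso e ≪≫ sh V₀ (-(k:ℤ)) (k:ℤ) 0 (by ring) ≪≫ sh0 V₀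
  · have hXV : X ∈ V := h.summand_V.mem_iso e (shiftVZ h hm0.le hV₀)
    refine ⟨0, ?_⟩
    simp only [Nat.cast_zero]
    exact h.summand_V.mem_iso (sh0 X) hXV

lemma U_eq_veeSet (h : IsCoTStructure U V) (hb : BoundedPair U V) : U = veeSet (U ∩ V) := by
  ext X
  constructor
  · intro hX
    obtain ⟨n, hn⟩ := exV h hb X
    exact Set.mem_iUnion.mpr ⟨n, veeMain h n X hX hn⟩
  · intro hX
    obtain ⟨n, hn⟩ := Set.mem_iUnion.mp hX
    exact veeN_sub_U h n hn

lemma V_eq_hatSet (h : IsCoTStructure U V) (hb : BoundedPair U V) : V = hatSet (U ∩ V) := by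
  ext X
  constructor
  · intro hX
    obtain ⟨n, hn⟩ := exU h hb X
    exact Set.mem_iUnion.mpr ⟨n, hatMain h n X hX hn⟩
  · intro hX
    obtain ⟨n, hn⟩ := Set.mem_iUnion.mp hX
    exact hatN_sub_V h n hn

lemma thick_iso {M : Set C} {A E : C} (hE : thickClosure M E) (e : A ≅ E) : thickClosure M A :=
  thickClosure.summand hE (isDirectSummand_of_iso e)

lemma thick_shift1 {M : Set C} {X : C} (h0 : thickClosure M (0:C)) (hX : thickClosure M X) :
    thickClosure M (X⟦(1:ℤ)⟧) :=
  thickClosure.cone (rot_of_distTriang _ (contractible_distinguished X)) hX h0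

lemma thick_shiftm1 {M : Set C} {X : C} (h0 : thickClosure M (0:C)) (hX : thickClosure M X) :
    thickClosure M (X⟦(-1:ℤ)⟧) :=
  thickClosure.cocone (rot_of_distTriang _ (contractible_distinguished (X⟦(-1:ℤ)⟧))) h0
    (thick_iso hX (sh X (-1) 1 0 (by ring) ≪≫ sh0 X))

lemma thick_shift {M : Set C} (h0 : thickClosure M (0:C)) :
    ∀ (m : ℤ) (X : C), thickClosure M X → thickClosure M (X⟦m⟧) := by
  intro m
  induction m using Int.induction_on with
  | zero => intro X hX; exact thick_iso hX (sh0 X)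
  | succ n ihp =>
    intro X hX
    exact thick_iso (thick_shift1 h0 (ihp X hX)) ((sh X (n:ℤ) 1 ((n:ℤ)+1) rfl).symm)
  | pred n ihn =>
    intro X hX
    exact thick_iso (thick_shiftm1 h0 (ihn X hX)) ((sh X (-(n:ℤ)) (-1) (-(n:ℤ)-1) (by ring)).symm)

lemma veeN_thick (h : IsCoTStructure U V) :
    ∀ (n : ℕ) (X : C), X ∈ veeN (U ∩ V) n → thickClosure (U ∩ V) X := by
  intro n
  induction n with
  | zero => exact fun X hX => thickClosure.of hX
  | succ n ih =>
    intro X hX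
    simp only [veeN] at hX
    obtain ⟨A, B, hA, hB, f, g, h', hT⟩ := hX
    obtain ⟨M₀, hM₀, ⟨e⟩⟩ := hA
    have thickA : thickClosure (U ∩ V) A :=
      thick_iso (thick_shift (thickClosure.of (zero_mem h)) _ _ (thickClosure.of hM₀)) e
    exact thickClosure.ext hT thickA (ih B hB)

lemma thick_all (h : IsCoTStructure U V) (hb : BoundedPair U V) (A : C) :
    thickClosure (U ∩ V) A := by
  have hA : A ∈ ⋃ n : ℤ, shiftSet n U := by rw [hb.1]; trivial
  obtain ⟨m, hm⟩ := Set.mem_iUnion.mp hA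
  obtain ⟨U₀, hU₀, ⟨e⟩⟩ := hm
  have h1 : thickClosure (U ∩ V) U₀ := by
    obtain ⟨n, hn⟩ := exV h hb U₀
    exact veeN_thick h n U₀ (veeMain h n U₀ hU₀ hn)
  exact thick_iso (thick_shift (thickClosure.of (zero_mem h)) m U₀ h1) e

end Auxiliary

/-- Theorem: if `(U,V)` is a bounded co-t-structure on `D`, then `M := U ∩ V` is a silting
subcategory of `D`, and `U = M^∨` and `V = M^∧`. -/
theorem stmt5 {U V : Set C} (h : IsCoTStructure U V) (hb : BoundedPair U V) :
    IsSilting (U ∩ V) ∧ U = veeSet (U ∩ V) ∧ V = hatSet (U ∩ V) := by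
  refine ⟨⟨⟨?_, ?_⟩, thick_all h hb⟩, U_eq_veeSet h hb, V_eq_hatSet h hb⟩
  · intro A E hE hs
    exact ⟨h.summand_U hE.1 hs, h.summand_V hE.2 hs⟩
  · intro A B hA hB k hk f
    exact hom_zero_le h hA.1 hB.2 k hk f
end
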